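/- arXiv:1409.1858 — 2 statements merged into one kernel-verified Lean document; each statement's English description precedes it below -/
import Mathlib

section
/- Let f : ℝ → ℝ be convex and locally Lipschitz, and for each u ∈ ℝ let ψ(t,u) denote the solution of ψ' = f(ψ), ψ(0,u) = u, defined on [0,T]. Then for each fixed t ∈ [0,T], the map u ↦ ψ(t,u) is convex on the set of initial values for which the solution exists up to time t. -/
open Real Set

/-- A convex function on `ℝ` has slopes bounded above on any bounded set. -/
lemma convex_slope_bound (f : ℝ → ℝ) (hconv : ConvexOn ℝ Set.univ f) (C : ℝ) :
    ∃ L, 0 ≤ L ∧ ∀ u v : ℝ, |u| ≤ C → |v| ≤ C → u < v → f v - f u ≤ L * (v - u) := by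
  refine ⟨max (f (C + 2) - f (C + 1)) 0, le_max_right _ _, fun u v hu hv huv => ?_⟩
  have hvC : v ≤ C := (abs_le.1 hv).2
  have h1 : (f v - f u) / (v - u) ≤ (f (C + 1) - f v) / (C + 1 - v) :=
    hconv.slope_mono_adjacent (mem_univ u) (mem_univ (C + 1)) huv (by linarith)
  have h2 : (f (C + 1) - f v) / (C + 1 - v) ≤ (f (C + 2) - f (C + 1)) / (C + 2 - (C + 1)) :=
    hconv.slope_mono_adjacent (mem_univ v) (mem_univ (C + 2)) (by linarith) (by linarith)
  have h3 : (f v - f u) / (v - u) ≤ max (f (C + 2) - f (C + 1)) 0 := by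
    refine (h1.trans h2).trans ?_
    have : C + 2 - (C + 1) = 1 := by ring
    rw [this, div_one]
    exact le_max_left _ _
  have hvu : 0 < v - u := by linarith
  calc f v - f u = (f v - f u) / (v - u) * (v - u) := by field_simp
    _ ≤ max (f (C + 2) - f (C + 1)) 0 * (v - u) := by
        exact mul_le_mul_of_nonneg_right h3 hvu.le

/-- If f : ℝ → ℝ is convex and locally Lipschitz and ψ(·, u) solves ψ' = f(ψ), ψ(0, u) = u
on [0, T] for each u in a set U of initial values, then for every fixed t ∈ [0, T]
the map u ↦ ψ(t, u) is convex on U. -/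
theorem ode_convex_dependence_on_initial_data
    (f : ℝ → ℝ) (hconv : ConvexOn ℝ Set.univ f) (hlip : LocallyLipschitz f)
    (T : ℝ) (hT : 0 < T) (U : Set ℝ) (ψ : ℝ → ℝ → ℝ)
    (hinit : ∀ u ∈ U, ψ 0 u = u)
    (hode : ∀ u ∈ U, ∀ t ∈ Set.Icc (0 : ℝ) T,
      HasDerivAt (fun s => ψ s u) (f (ψ t u)) t) :
    ∀ t ∈ Set.Icc (0 : ℝ) T, ∀ u₁ ∈ U, ∀ u₂ ∈ U, ∀ a b : ℝ,
      0 ≤ a → 0 ≤ b → a + b = 1 → a * u₁ + b * u₂ ∈ U →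
      ψ t (a * u₁ + b * u₂) ≤ a * ψ t u₁ + b * ψ t u₂ := by
  intro t ht u₁ hu₁ u₂ hu₂ a b ha hb hab hu₃
  set u₃ : ℝ := a * u₁ + b * u₂ with hu₃def
  -- various continuities
  have hcont : ∀ u ∈ U, ∀ x ∈ Icc (0:ℝ) T, ContinuousAt (fun s => ψ s u) x :=
    fun u hu x hx => (hode u hu x hx).continuousAt
  have hsub : Icc (0:ℝ) t ⊆ Icc (0:ℝ) T := Icc_subset_Icc le_rfl ht.2
  -- the convex combination and the difference
  set y : ℝ → ℝ := fun s => a * ψ s u₁ + b * ψ s u₂ with hy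
  set φ : ℝ → ℝ := fun s => ψ s u₃ - y s with hφ
  set g : ℝ → ℝ := fun s => max (φ s) 0 with hg
  have hφcont : ∀ x ∈ Icc (0:ℝ) T, ContinuousAt φ x := fun x hx =>
    ((hcont u₃ hu₃ x hx).sub (((hcont u₁ hu₁ x hx).const_mul a).add
      ((hcont u₂ hu₂ x hx).const_mul b)))
  -- a bound on all three solutions on [0, t]
  obtain ⟨C₁, hC₁⟩ := isCompact_Icc.exists_bound_of_continuousOn
    (fun x hx => ((hcont u₁ hu₁ x (hsub hx)).continuousWithinAt) : ContinuousOn (fun s => ψ s u₁) (Icc 0 t))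
  obtain ⟨C₂, hC₂⟩ := isCompact_Icc.exists_bound_of_continuousOn
    (fun x hx => ((hcont u₂ hu₂ x (hsub hx)).continuousWithinAt) : ContinuousOn (fun s => ψ s u₂) (Icc 0 t))
  obtain ⟨C₃, hC₃⟩ := isCompact_Icc.exists_bound_of_continuousOn
    (fun x hx => ((hcont u₃ hu₃ x (hsub hx)).continuousWithinAt) : ContinuousOn (fun s => ψ s u₃) (Icc 0 t))
  set C : ℝ := max C₁ (max C₂ C₃) with hC
  have hb1 : ∀ x ∈ Icc (0:ℝ) t, |ψ x u₁| ≤ C := fun x hx =>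
    (hC₁ x hx).trans (le_max_left _ _)
  have hb2 : ∀ x ∈ Icc (0:ℝ) t, |ψ x u₂| ≤ C := fun x hx =>
    (hC₂ x hx).trans ((le_max_left _ _).trans (le_max_right _ _))
  have hb3 : ∀ x ∈ Icc (0:ℝ) t, |ψ x u₃| ≤ C := fun x hx =>
    (hC₃ x hx).trans ((le_max_right _ _).trans (le_max_right _ _))
  have hby : ∀ x ∈ Icc (0:ℝ) t, |y x| ≤ C := by
    intro x hx
    have h1 := hb1 x hx; have h2 := hb2 x hx
    calc |y x| ≤ |a * ψ x u₁| + |b * ψ x u₂| := abs_add_le _ _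
      _ = a * |ψ x u₁| + b * |ψ x u₂| := by
          rw [abs_mul, abs_mul, abs_of_nonneg ha, abs_of_nonneg hb]
      _ ≤ a * C + b * C := add_le_add (mul_le_mul_of_nonneg_left h1 ha)
          (mul_le_mul_of_nonneg_left h2 hb)
      _ = C := by rw [← add_mul, hab, one_mul]
  -- slope bound
  obtain ⟨L, hL0, hL⟩ := convex_slope_bound f hconv C
  -- derivative of φ at points of [0, T]
  have hφderiv : ∀ x ∈ Icc (0:ℝ) T,
      HasDerivAt φ (f (ψ x u₃) - (a * f (ψ x u₁) + b * f (ψ x u₂))) x := fun x hx =>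
    ((hode u₃ hu₃ x hx).sub (((hode u₁ hu₁ x hx).const_mul a).add
      ((hode u₂ hu₂ x hx).const_mul b)))
  -- key one-sided estimate on the derivative of φ when φ x ≥ 0
  have hkey : ∀ x ∈ Icc (0:ℝ) t, 0 ≤ φ x →
      f (ψ x u₃) - (a * f (ψ x u₁) + b * f (ψ x u₂)) ≤ L * g x := by
    intro x hx hφx
    have hconv2 : f (y x) ≤ a * f (ψ x u₁) + b * f (ψ x u₂) := by
      have := hconv.2 (mem_univ (ψ x u₁)) (mem_univ (ψ x u₂)) ha hb hab
      simpa [smul_eq_mul] using this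
    have hgx : g x = φ x := max_eq_left hφx
    rcases eq_or_lt_of_le hφx with heq | hlt
    · have : ψ x u₃ = y x := by simp [hφ] at heq ⊢; linarith
      rw [this]
      have : L * g x = 0 := by rw [hgx, ← heq, mul_zero]
      linarith
    · have hyx : y x < ψ x u₃ := by simp [hφ] at hlt; linarith
      have := hL (y x) (ψ x u₃) (hby x hx) (hb3 x hx) hyx
      have hφeq : ψ x u₃ - y x = φ x := rfl
      rw [hφeq] at this
      rw [hgx]
      linarith
  -- apply Grönwall to g with δ = 0, K = L, ε = 0
  have hg0 : g 0 = 0 := by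
    have h0T : (0:ℝ) ∈ Icc (0:ℝ) T := ⟨le_rfl, hT.le⟩
    have : φ 0 = 0 := by
      simp only [hφ, hy, hinit u₁ hu₁, hinit u₂ hu₂, hinit u₃ hu₃, hu₃def]
      have h3 := hinit u₃ hu₃; rw [hu₃def] at h3; linarith [h3]
    simp [hg, this]
  have hgron : ∀ x ∈ Icc (0:ℝ) t, g x ≤ gronwallBound 0 L 0 (x - 0) := by
    apply le_gronwallBound_of_liminf_deriv_right_le (f' := fun x => L * g x)
    · -- continuity of g on [0, t]
      intro x hx
      exact (ContinuousAt.sup (hφcont x (hsub hx)) continuousAt_const).continuousWithinAt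
    · -- liminf slope condition
      intro x hx r hr
      have hxt : x ∈ Icc (0:ℝ) t := ⟨hx.1, hx.2.le⟩
      rcases lt_or_ge (φ x) 0 with hneg | hpos
      · -- φ x < 0 : g vanishes near x
        have hgx : g x = 0 := max_eq_right hneg.le
        have hr0 : 0 < r := by rw [hgx, mul_zero] at hr; exact hr
        have hev : ∀ᶠ z in nhds x, φ z < 0 :=
          (hφcont x (hsub hxt)).eventually_lt continuousAt_const hneg
        have hev' : ∀ᶠ z in nhdsWithin x (Ioi x),
            (z - x)⁻¹ * (g z - g x) < r := by
          filter_upwards [hev.filter_mono nhdsWithin_le_nhds] with z hz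
          have : g z = 0 := max_eq_right hz.le
          rw [this, hgx, sub_zero, mul_zero]
          exact hr0
        exact hev'.frequently
      · -- φ x ≥ 0 : use the derivative of φ
        have hgx : g x = φ x := max_eq_left hpos
        have hd := hφderiv x (hsub hxt)
        have hslope : Filter.Tendsto (fun z => (z - x)⁻¹ * (φ z - φ x))
            (nhdsWithin x (Ioi x))
            (nhds (f (ψ x u₃) - (a * f (ψ x u₁) + b * f (ψ x u₂)))) := by
          have h5 := hd.hasDerivWithinAt (s := Ioi x)
          rw [hasDerivWithinAt_iff_tendsto_slope] at h5
          have hset : Ioi x \ {x} = Ioi x := Set.diff_singleton_eq_self (by simp)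
          rw [hset] at h5
          refine h5.congr (fun z => ?_)
          rw [slope_def_field]
          ring
        have hlim : f (ψ x u₃) - (a * f (ψ x u₁) + b * f (ψ x u₂)) < r :=
          lt_of_le_of_lt (hkey x hxt hpos) hr
        have hr0 : 0 < r := by
          have : 0 ≤ L * g x := mul_nonneg hL0 (le_max_right _ _)
          linarith
        have hev : ∀ᶠ z in nhdsWithin x (Ioi x),
            (z - x)⁻¹ * (φ z - φ x) < r := hslope.eventually_lt_const hlim
        have hev' : ∀ᶠ z in nhdsWithin x (Ioi x),
            (z - x)⁻¹ * (g z - g x) < r := by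
          filter_upwards [hev, self_mem_nhdsWithin] with z hz (hzx : z ∈ Ioi x)
          have hzx' : (0:ℝ) < z - x := by simpa [sub_pos] using hzx
          have h1 : g z - g x ≤ max (φ z - φ x) 0 := by
            rw [hgx]
            rcases le_or_gt (φ z) 0 with h | h
            · have : g z = 0 := max_eq_right h
              rw [this]
              have : -(φ x) ≤ 0 := by linarith
              calc (0:ℝ) - φ x ≤ 0 := by linarith
                _ ≤ max (φ z - φ x) 0 := le_max_right _ _
            · have : g z = φ z := max_eq_left h.le
              rw [this]; exact le_max_left _ _
          rcases le_total (φ z - φ x) 0 with h | h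
          · have h3 : g z - g x ≤ 0 := le_trans h1 (le_of_eq (max_eq_right h))
            have h4 := mul_le_mul_of_nonneg_left h3 (inv_nonneg.2 hzx'.le)
            rw [mul_zero] at h4
            linarith
          · have h4 : (z - x)⁻¹ * (g z - g x) ≤ (z - x)⁻¹ * (φ z - φ x) :=
              mul_le_mul_of_nonneg_left (h1.trans_eq (max_eq_left h)) (inv_nonneg.2 hzx'.le)
            exact h4.trans_lt hz
        exact hev'.frequently
    · rw [hg0]
    · intro x hx
      simp
  have hgt : g t ≤ 0 := by
    have := hgron t ⟨ht.1, le_rfl⟩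
    rwa [sub_zero, gronwallBound_ε0_δ0] at this
  have : φ t ≤ 0 := le_trans (le_max_left _ _) hgt
  simpa [hφ, hy, sub_nonpos] using this
end

section
/- Suppose φ, ψ satisfy the semiflow equations φ(t+s,u) = φ(t,u) + φ(s, ψ(t,u)) and ψ(t+s,u) = ψ(s, ψ(t,u)) for all s,t ≥ 0, with φ(0,u) = 0, ψ(0,u) = u, and that φ, ψ are differentiable in t at 0 with derivatives F(u), R(u). Then φ and ψ are differentiable in t everywhere and satisfy the generalized Riccati equations ∂ₜψ(t,u) = R(ψ(t,u)), ∂ₜφ(t,u) = F(ψ(t,u)). -/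
open Set

/-- If (φ, ψ) satisfy the semiflow equations with φ(0,u) = 0, ψ(0,u) = u and are
differentiable in t at t = 0 (from the right) with derivatives F(u), R(u), then they are
differentiable in t everywhere on ℝ₊ and satisfy the generalized Riccati equations
∂ₜψ(t,u) = R(ψ(t,u)) and ∂ₜφ(t,u) = F(ψ(t,u)). -/
theorem semiflow_implies_riccati (d : ℕ) (U : Set (Fin d → ℂ))
    (φ : ℝ → (Fin d → ℂ) → ℂ) (ψ : ℝ → (Fin d → ℂ) → (Fin d → ℂ))
    (F : (Fin d → ℂ) → ℂ) (R : (Fin d → ℂ) → (Fin d → ℂ))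
    (hinv : ∀ u ∈ U, ∀ t : ℝ, 0 ≤ t → ψ t u ∈ U)
    (hφ0 : ∀ u ∈ U, φ 0 u = 0) (hψ0 : ∀ u ∈ U, ψ 0 u = u)
    (hφflow : ∀ u ∈ U, ∀ s t : ℝ, 0 ≤ s → 0 ≤ t →
      φ (t + s) u = φ t u + φ s (ψ t u))
    (hψflow : ∀ u ∈ U, ∀ s t : ℝ, 0 ≤ s → 0 ≤ t →
      ψ (t + s) u = ψ s (ψ t u))
    (hφder0 : ∀ u ∈ U, HasDerivWithinAt (fun t => φ t u) (F u) (Set.Ici 0) 0)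
    (hψder0 : ∀ u ∈ U, HasDerivWithinAt (fun t => ψ t u) (R u) (Set.Ici 0) 0) :
    ∀ u ∈ U, ∀ t : ℝ, 0 ≤ t →
      HasDerivWithinAt (fun s => ψ s u) (R (ψ t u)) (Set.Ici t) t ∧
      HasDerivWithinAt (fun s => φ s u) (F (ψ t u)) (Set.Ici t) t := by
  intro u hu t ht
  set v := ψ t u with hv
  have hvU : v ∈ U := hinv u hu t ht
  have hmaps : MapsTo (fun s : ℝ => s - t) (Ici t) (Ici 0) := fun s hs => by
    simp only [mem_Ici] at hs ⊢; linarith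
  have hinner : HasDerivWithinAt (fun s : ℝ => s - t) 1 (Ici t) t :=
    (hasDerivWithinAt_id t (Ici t)).sub_const t
  have hψeq : ∀ s ∈ Ici t, ψ s u = ψ (s - t) v := fun s hs => by
    have := hψflow u hu (s - t) t (by simpa using hs) ht
    rwa [add_sub_cancel] at this
  have hφeq : ∀ s ∈ Ici t, φ s u = φ t u + φ (s - t) v := fun s hs => by
    have := hφflow u hu (s - t) t (by simpa using hs) ht
    rwa [add_sub_cancel] at this
  have htt : (t : ℝ) - t = 0 := sub_self t
  constructor
  · have h0 : HasDerivWithinAt (fun s => ψ s v) (R v) (Ici 0) (t - t) := by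
      rw [htt]; exact hψder0 v hvU
    have hcomp : HasDerivWithinAt (fun s : ℝ => ψ (s - t) v) (R v) (Ici t) t := by
      have := h0.scomp_of_eq t hinner hmaps rfl
      simpa [Function.comp_def] using this
    exact hcomp.congr hψeq (by rw [htt, hψ0 v hvU])
  · have h0 : HasDerivWithinAt (fun s => φ s v) (F v) (Ici 0) (t - t) := by
      rw [htt]; exact hφder0 v hvU
    have hcomp : HasDerivWithinAt (fun s : ℝ => φ (s - t) v) (F v) (Ici t) t := by
      have := h0.scomp_of_eq t hinner hmaps rfl
      simpa [Function.comp_def] using this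
    have hcomp2 : HasDerivWithinAt (fun s : ℝ => φ t u + φ (s - t) v) (F v) (Ici t) t :=
      hcomp.const_add _
    exact hcomp2.congr hφeq (by rw [htt, hφ0 v hvU, add_zero])
end
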